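/- If a bounded linear operator M on L²(ℝ) commutes with multiplication by e^{nx} for all positive integers n (on the common domain E = {f ∈ L² : e^{nx} f ∈ L² for all n > 0}), then M restricted to E is multiplication by a fixed measurable function F(x). -/

import Mathlib

open MeasureTheory Filter Real

noncomputable section
namespace CEP

/-! ### the function ψ(x) = (eˣ+1)⁻¹ and its inverse -/

def ψ (x : ℝ) : ℝ := (Real.exp x + 1)⁻¹
lemma epo (x : ℝ) : 0 < Real.exp x + 1 := by positivity
lemma ψ_pos (x : ℝ) : 0 < ψ x := inv_pos.mpr (epo x)
lemma ψ_lt_one (x : ℝ) : ψ x < 1 := by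
  rw [ψ, inv_lt_one_iff₀]; right; linarith [Real.exp_pos x]
lemma ψ_cont : Continuous ψ := by
  apply Continuous.inv₀ (by continuity)
  intro x; exact (epo x).ne'
lemma ψ_le_one (x : ℝ) : ψ x ≤ 1 := (ψ_lt_one x).le
lemma ψ_strictAnti : StrictAnti ψ := fun a b h => by
  have := Real.exp_lt_exp.mpr h
  exact inv_strictAnti₀ (epo a) (by linarith)
lemma exp_mul_ψ_le_one (x : ℝ) : Real.exp x * ψ x ≤ 1 := by
  rw [ψ, mul_inv_le_iff₀ (epo x)]
  linarith [Real.exp_pos x]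
lemma ψ_mul_exp_add_one (x : ℝ) : ψ x * (Real.exp x + 1) = 1 := inv_mul_cancel₀ (epo x).ne'
lemma cast_ψ_mul (x : ℝ) : ((ψ x : ℝ) : ℂ) * ((Real.exp x : ℝ) : ℂ) + ((ψ x : ℝ) : ℂ) = 1 := by
  have h : ((ψ x : ℝ) : ℂ) * ((Real.exp x : ℝ) : ℂ) + ((ψ x : ℝ) : ℂ)
      = ((ψ x * (Real.exp x + 1) : ℝ) : ℂ) := by
    simp [Complex.ofReal_mul, Complex.ofReal_add]; ring
  rw [h, ψ_mul_exp_add_one, Complex.ofReal_one]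
lemma cexp_cont (c : ℝ) : Continuous fun x : ℝ => ((Real.exp (c*x) : ℝ) : ℂ) :=
  Complex.continuous_ofReal.comp (Real.continuous_exp.comp (continuous_const.mul continuous_id))

lemma ψ_inv (x : ℝ) : Real.log ((1 - ψ x)/ψ x) = x := by
  have h1 : (1 - ψ x)/ψ x = Real.exp x := by
    rw [ψ, div_eq_iff (inv_ne_zero (epo x).ne')]
    field_simp
    ring
  rw [h1, Real.log_exp]

lemma ψ_log (s : ℝ) (h0 : 0 < s) (h1 : s < 1) : ψ (Real.log ((1 - s)/s)) = s := by
  have hpos : 0 < (1-s)/s := div_pos (by linarith) h0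
  rw [ψ, Real.exp_log hpos]
  have h2 : (1-s)/s + 1 = 1/s := by field_simp; ring
  rw [h2, one_div, inv_inv]

/-! ### the Gaussian -/

def g0 (x : ℝ) : ℂ := ((Real.exp (-(x^2)) : ℝ) : ℂ)
lemma g0_cont : Continuous g0 := by
  apply Complex.continuous_ofReal.comp; continuity
lemma g0_ne_zero (x : ℝ) : g0 x ≠ 0 :=
  Complex.ofReal_ne_zero.mpr (Real.exp_pos _).ne'

lemma g0_mem (c : ℝ) :
    MemLp (fun x : ℝ => ((Real.exp (c*x) : ℝ) : ℂ) * g0 x) 2 (volume : Measure ℝ) := by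
  have hasm : AEStronglyMeasurable (fun x : ℝ => ((Real.exp (c*x) : ℝ) : ℂ) * g0 x) volume :=
    ((cexp_cont c).mul g0_cont).aestronglyMeasurable
  rw [memLp_two_iff_integrable_sq_norm hasm]
  have heq : (fun x : ℝ => ‖((Real.exp (c*x) : ℝ) : ℂ) * g0 x‖^2)
      = fun x : ℝ => Real.exp (c^2/2) * Real.exp (-2 * (x - c/2)^2) := by
    funext x
    rw [norm_mul, g0]
    simp only [Complex.norm_real, Real.norm_eq_abs, abs_of_pos (Real.exp_pos _)]
    rw [← Real.exp_add, ← Real.exp_nat_mul, ← Real.exp_add]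
    congr 1; ring
  rw [heq]
  exact ((integrable_exp_neg_mul_sq (by norm_num : (0:ℝ) < 2)).comp_sub_right (c/2)).const_mul _

lemma g0_memℒp : MemLp g0 2 (volume : Measure ℝ) := by
  refine (g0_mem 0).ae_eq ?_
  filter_upwards with x
  norm_num

def f0lp : Lp ℂ 2 (volume : Measure ℝ) := g0_memℒp.toLp _
lemma f0_coe : ⇑f0lp =ᵐ[volume] g0 := g0_memℒp.coeFn_toLp

/-! ### sums in Lp -/

lemma Lp_coeFn_sum {ι : Type*} (s : Finset ι) (F : ι → Lp ℂ 2 (volume : Measure ℝ)) :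
    ⇑(∑ i ∈ s, F i) =ᵐ[volume] fun x => ∑ i ∈ s, F i x := by
  classical
  induction s using Finset.cons_induction with
  | empty =>
    simp only [Finset.sum_empty]
    exact Lp.coeFn_zero ℂ 2 volume
  | cons i s his ih =>
    simp only [Finset.sum_cons]
    filter_upwards [Lp.coeFn_add (F i) (∑ j ∈ s, F j), ih] with x h1 h2
    rw [h1]
    simp only [Pi.add_apply]
    rw [h2]

/-! ### the transported function φ -/

def φf (G : ℝ → ℂ) : ℝ → ℂ := fun s => if 0 < s ∧ s < 1 then G (Real.log ((1 - s)/s)) else 0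

lemma φψ (G : ℝ → ℂ) (x : ℝ) : φf G (ψ x) = G x := by
  rw [φf, if_pos ⟨ψ_pos x, ψ_lt_one x⟩, ψ_inv x]

variable {G : ℝ → ℂ} {R : ℝ}

lemma φ_vanish_lo (hG : ∀ x : ℝ, R < |x| → G x = 0) (s : ℝ) (hs : s < ψ R) : φf G s = 0 := by
  rw [φf]
  split_ifs with h
  · obtain ⟨h0, h1⟩ := h
    apply hG
    have hψy : ψ (Real.log ((1-s)/s)) = s := ψ_log s h0 h1
    have hRlt : R < Real.log ((1-s)/s) := by
      by_contra hc
      push_neg at hc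
      have := ψ_strictAnti.antitone hc
      rw [hψy] at this
      linarith
    exact lt_of_lt_of_le hRlt (le_abs_self _)
  · rfl

lemma φ_vanish_hi (hG : ∀ x : ℝ, R < |x| → G x = 0) (s : ℝ) (hs : ψ (-R) < s) : φf G s = 0 := by
  rw [φf]
  split_ifs with h
  · obtain ⟨h0, h1⟩ := h
    apply hG
    have hψy : ψ (Real.log ((1-s)/s)) = s := ψ_log s h0 h1
    have hRlt : Real.log ((1-s)/s) < -R := by
      by_contra hc
      push_neg at hc
      have := ψ_strictAnti.antitone hc
      rw [hψy] at this
      linarith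
    have h2 : R < -Real.log ((1-s)/s) := by linarith
    exact lt_of_lt_of_le h2 (neg_le_abs _)
  · rfl

lemma φ_cont (hGc : Continuous G) (hG : ∀ x : ℝ, R < |x| → G x = 0) :
    Continuous (φf G) := by
  rw [continuous_iff_continuousAt]
  intro s₀
  rcases lt_or_ge s₀ (ψ R) with hlo | hlo
  · have h : ∀ᶠ s in nhds s₀, φf G s = (fun _ => (0:ℂ)) s :=
      eventually_of_mem (Iio_mem_nhds hlo) (fun s hs => φ_vanish_lo hG s hs)
    exact Filter.EventuallyEq.continuousAt h
  · rcases lt_or_ge (ψ (-R)) s₀ with hhi | hhi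
    · have h : ∀ᶠ s in nhds s₀, φf G s = (fun _ => (0:ℂ)) s :=
        eventually_of_mem (Ioi_mem_nhds hhi) (fun s hs => φ_vanish_hi hG s hs)
      exact Filter.EventuallyEq.continuousAt h
    · have h0 : 0 < s₀ := lt_of_lt_of_le (ψ_pos R) hlo
      have h1 : s₀ < 1 := lt_of_le_of_lt hhi (ψ_lt_one (-R))
      have hdiv : ContinuousAt (fun s : ℝ => (1 - s)/s) s₀ :=
        ContinuousAt.div (continuousAt_const.sub continuousAt_id) continuousAt_id h0.ne'
      have hne : (1 - s₀)/s₀ ≠ 0 := (div_pos (by linarith : (0:ℝ) < 1 - s₀) h0).ne'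
      have hlog : ContinuousAt (fun s : ℝ => Real.log ((1 - s)/s)) s₀ :=
        ContinuousAt.comp (x := s₀) (g := Real.log) (Real.continuousAt_log hne) hdiv
      have hinner : ContinuousAt (fun s : ℝ => G (Real.log ((1 - s)/s))) s₀ :=
        ContinuousAt.comp (x := s₀) (g := G) hGc.continuousAt hlog
      apply hinner.congr
      filter_upwards [Ioo_mem_nhds h0 h1] with s hs
      rw [φf, if_pos ⟨hs.1, hs.2⟩]

/-! ### main section -/

section Main
variable (M : Lp ℂ 2 (volume : Measure ℝ) →L[ℂ] Lp ℂ 2 (volume : Measure ℝ))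
    (E : Set (Lp ℂ 2 (volume : Measure ℝ)))
    (hE : E = {f | ∀ n : ℕ, 0 < n →
      MemLp (fun x : ℝ => (Real.exp (n * x) : ℂ) * f x) 2 (volume : Measure ℝ)})
    (hcomm : ∀ (n : ℕ), 0 < n → ∀ f g : Lp ℂ 2 (volume : Measure ℝ), f ∈ E →
      (∀ᵐ x : ℝ, g x = (Real.exp (n * x) : ℂ) * f x) →
      (∀ᵐ x : ℝ, (M g) x = (Real.exp (n * x) : ℂ) * (M f) x))

include hE in
lemma f0_E : f0lp ∈ E := by
  rw [hE]
  intro n hn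
  refine (g0_mem (n : ℝ)).ae_eq ?_
  filter_upwards [f0_coe] with x hx
  rw [hx]

lemma psi_mul_memℒp (f : Lp ℂ 2 (volume : Measure ℝ)) :
    MemLp (fun x : ℝ => ((ψ x : ℝ) : ℂ) * f x) 2 (volume : Measure ℝ) := by
  refine MemLp.of_le (Lp.memLp f)
    ((Complex.continuous_ofReal.comp ψ_cont).aestronglyMeasurable.mul
      (Lp.aestronglyMeasurable f)) ?_
  filter_upwards with x
  rw [norm_mul, Complex.norm_real, Real.norm_eq_abs, abs_of_pos (ψ_pos x)]
  exact mul_le_of_le_one_left (norm_nonneg _) (ψ_le_one x)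

include hE hcomm in
/-- The key resolvent lemma. -/
lemma resolvent {f : Lp ℂ 2 (volume : Measure ℝ)} (hf : f ∈ E) :
    ∃ u : Lp ℂ 2 (volume : Measure ℝ), u ∈ E ∧
      (⇑u =ᵐ[volume] fun x => ((ψ x : ℝ) : ℂ) * f x) ∧
      (⇑(M u) =ᵐ[volume] fun x => ((ψ x : ℝ) : ℂ) * (M f) x) := by
  have hu_mem := psi_mul_memℒp f
  set u : Lp ℂ 2 (volume : Measure ℝ) := hu_mem.toLp _ with hu_def
  have hu_coe : ⇑u =ᵐ[volume] fun x => ((ψ x : ℝ) : ℂ) * f x := hu_mem.coeFn_toLp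
  have hu_E : u ∈ E := by
    rw [hE]; intro n hn
    have hfn : MemLp (fun x : ℝ => (Real.exp (n * x) : ℂ) * f x) 2 volume := by
      rw [hE] at hf; exact hf n hn
    have h1 : MemLp (fun x : ℝ => (Real.exp (n * x) : ℂ) * (((ψ x : ℝ) : ℂ) * f x)) 2 volume := by
      refine MemLp.of_le hfn
        (((cexp_cont (n:ℝ)).aestronglyMeasurable).mul
          ((Complex.continuous_ofReal.comp ψ_cont).aestronglyMeasurable.mul
            (Lp.aestronglyMeasurable f))) ?_
      filter_upwards with x
      rw [norm_mul, norm_mul, norm_mul, Complex.norm_real, Complex.norm_real,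
        Real.norm_eq_abs, Real.norm_eq_abs, abs_of_pos (ψ_pos x), abs_of_pos (Real.exp_pos _)]
      have h5 : ψ x * ‖f x‖ ≤ ‖f x‖ := mul_le_of_le_one_left (norm_nonneg _) (ψ_le_one x)
      exact mul_le_mul_of_nonneg_left h5 (Real.exp_pos _).le
    refine h1.ae_eq ?_
    filter_upwards [hu_coe] with x hx
    rw [hx]
  have hg_mem : MemLp (fun x : ℝ => (Real.exp ((1:ℕ) * x) : ℂ) * u x) 2 volume := by
    refine MemLp.of_le (Lp.memLp f)
      (((cexp_cont ((1:ℕ):ℝ)).aestronglyMeasurable).mul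
        (Lp.aestronglyMeasurable u)) ?_
    filter_upwards [hu_coe] with x hx
    rw [hx, norm_mul, norm_mul, Complex.norm_real, Complex.norm_real, Real.norm_eq_abs,
      Real.norm_eq_abs, abs_of_pos (Real.exp_pos _), abs_of_pos (ψ_pos x), ← mul_assoc]
    simp only [Nat.cast_one, one_mul]
    have h5 : Real.exp x * ψ x * ‖f x‖ ≤ ‖f x‖ :=
      mul_le_of_le_one_left (norm_nonneg _) (exp_mul_ψ_le_one x)
    linarith
  set g : Lp ℂ 2 (volume : Measure ℝ) := hg_mem.toLp _ with hg_def
  have hg_coe : ⇑g =ᵐ[volume] fun x => (Real.exp ((1:ℕ) * x) : ℂ) * u x := hg_mem.coeFn_toLp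
  have hMg := hcomm 1 one_pos u g hu_E hg_coe
  have hsum : f = g + u := by
    apply Lp.ext
    filter_upwards [Lp.coeFn_add g u, hg_coe, hu_coe] with x h1 h2 h3
    rw [h1]
    simp only [Pi.add_apply]
    rw [h2, h3]
    simp only [Nat.cast_one, one_mul]
    linear_combination (-(f x)) * cast_ψ_mul x
  refine ⟨u, hu_E, hu_coe, ?_⟩
  have hMsum : ⇑(M f) =ᵐ[volume] fun x => ((Real.exp x : ℝ) : ℂ) * (M u) x + (M u) x := by
    rw [hsum, map_add]
    filter_upwards [Lp.coeFn_add (M g) (M u), hMg] with x h1 h2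
    rw [h1]
    simp only [Pi.add_apply]
    rw [h2]
    simp only [Nat.cast_one, one_mul]
  filter_upwards [hMsum] with x h1
  rw [h1]
  linear_combination (-((M u) x)) * cast_ψ_mul x

include hE hcomm in
/-- powers of ψ times the Gaussian -/
lemma powers : ∀ k : ℕ, ∃ w : Lp ℂ 2 (volume : Measure ℝ), w ∈ E ∧
    (⇑w =ᵐ[volume] fun x => ((ψ x ^ k : ℝ) : ℂ) * g0 x) ∧
    (⇑(M w) =ᵐ[volume] fun x => ((ψ x ^ k : ℝ) : ℂ) * (M f0lp) x) := by
  intro k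
  induction k with
  | zero =>
    refine ⟨f0lp, f0_E E hE, ?_, ?_⟩
    · filter_upwards [f0_coe] with x hx
      simp [hx]
    · filter_upwards with x
      simp
  | succ k ih =>
    obtain ⟨w, hwE, hw, hMw⟩ := ih
    obtain ⟨u, huE, hu, hMu⟩ := resolvent M E hE hcomm hwE
    refine ⟨u, huE, ?_, ?_⟩
    · filter_upwards [hu, hw] with x h1 h2
      rw [h1, h2, ← mul_assoc]
      push_cast
      ring
    · filter_upwards [hMu, hMw] with x h1 h2
      rw [h1, h2, ← mul_assoc]
      push_cast
      ring

include hE hcomm in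
/-- approximation of an arbitrary L² function by elements on which M acts as
multiplication by (M f0)/f0 -/
lemma approx (f : Lp ℂ 2 (volume : Measure ℝ)) {ε : ℝ} (hε : 0 < ε) :
    ∃ v : Lp ℂ 2 (volume : Measure ℝ),
      eLpNorm (⇑f - ⇑v) 2 volume ≤ ENNReal.ofReal ε ∧
      (∀ᵐ x : ℝ, (M v) x * g0 x = (M f0lp) x * v x) := by
  choose w hwE hwcoe hMw using powers M E hE hcomm
  have hε2 : (ENNReal.ofReal (ε/2)) ≠ 0 := by
    simp only [ne_eq, ENNReal.ofReal_eq_zero, not_le]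
    linarith
  obtain ⟨g, gcs, gerr, gcont, gmem⟩ :=
    (Lp.memLp f).exists_hasCompactSupport_eLpNorm_sub_le
      (by norm_num : (2:ENNReal) ≠ ⊤) hε2
  obtain ⟨R0, hR0⟩ := gcs.isBounded.subset_closedBall 0
  set R := max R0 0 with hRdef
  have gz : ∀ x : ℝ, R < |x| → g x = 0 := by
    intro x hx
    apply image_eq_zero_of_notMem_tsupport
    intro hmem
    have h1 := hR0 hmem
    rw [Metric.mem_closedBall, Real.dist_eq, sub_zero] at h1
    have h2 : |x| ≤ R := le_trans h1 (le_max_left _ _)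
    linarith
  set G : ℝ → ℂ := fun x => g x * ((Real.exp (x^2) : ℝ) : ℂ) with hGdef
  have Gcont : Continuous G :=
    gcont.mul (Complex.continuous_ofReal.comp (Real.continuous_exp.comp (continuous_pow 2)))
  have Gz : ∀ x : ℝ, R < |x| → G x = 0 := by
    intro x hx
    rw [hGdef]
    simp only [gz x hx, zero_mul]
  have G_g0 : ∀ x, G x * g0 x = g x := by
    intro x
    rw [hGdef, g0]
    simp only []
    rw [mul_assoc, ← Complex.ofReal_mul, ← Real.exp_add]
    simp
  -- Weierstrass approximation of φf G
  have φcont : Continuous (φf G) := φ_cont Gcont Gz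
  set C := (eLpNorm g0 2 volume).toReal with hC
  have hC0 : 0 ≤ C := ENNReal.toReal_nonneg
  set δ := ε/(8*(C+1)) with hδdef
  have hδ0 : 0 < δ := by positivity
  obtain ⟨p, hp⟩ := exists_polynomial_near_of_continuousOn 0 1 (fun s => (φf G s).re)
    (Complex.continuous_re.comp φcont).continuousOn δ hδ0
  obtain ⟨q, hq⟩ := exists_polynomial_near_of_continuousOn 0 1 (fun s => (φf G s).im)
    (Complex.continuous_im.comp φcont).continuousOn δ hδ0
  set N := max p.natDegree q.natDegree + 1 with hN
  set a : ℕ → ℂ := fun j => (p.coeff j : ℂ) + (q.coeff j : ℂ) * Complex.I with ha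
  set v : Lp ℂ 2 (volume : Measure ℝ) := ∑ j ∈ Finset.range N, a j • w j with hv
  -- pointwise polynomial approximation
  have hpoly : ∀ s : ℝ, 0 ≤ s → s ≤ 1 →
      ‖(∑ j ∈ Finset.range N, a j * ((s^j : ℝ) : ℂ)) - φf G s‖ ≤ 2*δ := by
    intro s hs0 hs1
    have hps : p.eval s = ∑ j ∈ Finset.range N, p.coeff j * s^j :=
      Polynomial.eval_eq_sum_range' (Nat.lt_succ_of_le (le_max_left _ _)) s
    have hqs : q.eval s = ∑ j ∈ Finset.range N, q.coeff j * s^j :=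
      Polynomial.eval_eq_sum_range' (Nat.lt_succ_of_le (le_max_right _ _)) s
    have hsum : (∑ j ∈ Finset.range N, a j * ((s^j : ℝ) : ℂ))
        = ((p.eval s : ℝ) : ℂ) + ((q.eval s : ℝ) : ℂ) * Complex.I := by
      rw [hps, hqs]
      push_cast
      rw [Finset.sum_mul, ← Finset.sum_add_distrib]
      refine Finset.sum_congr rfl fun j _ => ?_
      rw [ha]
      ring
    rw [hsum]
    have hrw : ((p.eval s : ℝ) : ℂ) + ((q.eval s : ℝ) : ℂ) * Complex.I - φf G s
        = ((p.eval s - (φf G s).re : ℝ) : ℂ)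
          + ((q.eval s - (φf G s).im : ℝ) : ℂ) * Complex.I := by
      apply Complex.ext <;> simp
    rw [hrw]
    have h1 := hp s ⟨hs0, hs1⟩
    have h2 := hq s ⟨hs0, hs1⟩
    calc ‖((p.eval s - (φf G s).re : ℝ) : ℂ)
          + ((q.eval s - (φf G s).im : ℝ) : ℂ) * Complex.I‖
        ≤ ‖((p.eval s - (φf G s).re : ℝ) : ℂ)‖
          + ‖((q.eval s - (φf G s).im : ℝ) : ℂ) * Complex.I‖ := norm_add_le _ _
      _ = |p.eval s - (φf G s).re| + |q.eval s - (φf G s).im| := by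
          rw [norm_mul, Complex.norm_I, mul_one, Complex.norm_real, Complex.norm_real,
            Real.norm_eq_abs, Real.norm_eq_abs]
      _ ≤ δ + δ := add_le_add h1.le h2.le
      _ = 2*δ := by ring
  -- coefficient functions of v and M v
  have hvcoe : ⇑v =ᵐ[volume]
      fun x => (∑ j ∈ Finset.range N, a j * (((ψ x)^j : ℝ) : ℂ)) * g0 x := by
    have h1 := Lp_coeFn_sum (Finset.range N) (fun j => a j • w j)
    have h2 : ∀ᵐ x : ℝ ∂volume, ∀ j ∈ Finset.range N,
        (a j • w j) x = a j * (((ψ x)^j : ℝ) : ℂ) * g0 x := by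
      rw [eventually_all_finset]
      intro j _
      filter_upwards [Lp.coeFn_smul (a j) (w j), hwcoe j] with x hx1 hx2
      rw [hx1]
      simp only [Pi.smul_apply, smul_eq_mul]
      rw [hx2]
      ring
    filter_upwards [h1, h2] with x hx1 hx2
    rw [hx1, Finset.sum_mul]
    exact Finset.sum_congr rfl fun j hj => hx2 j hj
  have hMvcoe : ⇑(M v) =ᵐ[volume]
      fun x => (∑ j ∈ Finset.range N, a j * (((ψ x)^j : ℝ) : ℂ)) * (M f0lp) x := by
    have hMv0 : M v = ∑ j ∈ Finset.range N, a j • M (w j) := by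
      rw [hv, map_sum]
      exact Finset.sum_congr rfl fun j _ => map_smul M (a j) (w j)
    rw [hMv0]
    have h1 := Lp_coeFn_sum (Finset.range N) (fun j => a j • M (w j))
    have h2 : ∀ᵐ x : ℝ ∂volume, ∀ j ∈ Finset.range N,
        (a j • M (w j)) x = a j * (((ψ x)^j : ℝ) : ℂ) * (M f0lp) x := by
      rw [eventually_all_finset]
      intro j _
      filter_upwards [Lp.coeFn_smul (a j) (M (w j)), hMw j] with x hx1 hx2
      rw [hx1]
      simp only [Pi.smul_apply, smul_eq_mul]
      rw [hx2]
      ring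
    filter_upwards [h1, h2] with x hx1 hx2
    rw [hx1, Finset.sum_mul]
    exact Finset.sum_congr rfl fun j hj => hx2 j hj
  -- the multiplication property
  have hP : ∀ᵐ x : ℝ, (M v) x * g0 x = (M f0lp) x * v x := by
    filter_upwards [hvcoe, hMvcoe] with x h1 h2
    rw [h1, h2]
    ring
  -- error bound between g and v
  have herr2 : eLpNorm (g - ⇑v) 2 volume ≤ ENNReal.ofReal (ε/2) := by
    have hb : ∀ᵐ x : ℝ ∂volume, ‖g x - v x‖ ≤ ‖(2*δ : ℝ) • g0 x‖ := by
      filter_upwards [hvcoe] with x hx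
      have hgx : g x - v x = (φf G (ψ x) - (∑ j ∈ Finset.range N, a j * (((ψ x)^j : ℝ) : ℂ))) * g0 x := by
        rw [hx, φψ G x, ← G_g0 x]
        ring
      rw [hgx, norm_mul, norm_smul]
      refine mul_le_mul_of_nonneg_right ?_ (norm_nonneg _)
      rw [norm_sub_rev, Real.norm_eq_abs, abs_of_pos (by linarith : (0:ℝ) < 2*δ)]
      exact hpoly (ψ x) (ψ_pos x).le (ψ_le_one x)
    calc eLpNorm (g - ⇑v) 2 volume
        ≤ eLpNorm ((2*δ : ℝ) • g0) 2 volume := eLpNorm_mono_ae hb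
      _ = (‖(2*δ : ℝ)‖₊ : ENNReal) * eLpNorm g0 2 volume := eLpNorm_const_smul _ _ _ _
      _ = ENNReal.ofReal (2*δ) * ENNReal.ofReal C := by
          rw [← enorm_eq_nnnorm, ← ofReal_norm, hC,
            ENNReal.ofReal_toReal g0_memℒp.eLpNorm_ne_top,
            Real.norm_eq_abs, abs_of_pos (by linarith : (0:ℝ) < 2*δ)]
      _ = ENNReal.ofReal (2*δ*C) := by
          rw [← ENNReal.ofReal_mul (by linarith : (0:ℝ) ≤ 2*δ)]
      _ ≤ ENNReal.ofReal (ε/2) := by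
          apply ENNReal.ofReal_le_ofReal
          rw [hδdef]
          have h1 : 2*(ε/(8*(C+1)))*C = ε*C/(4*(C+1)) := by
            field_simp
            ring
          rw [h1, div_le_div_iff₀ (by positivity) (by norm_num : (0:ℝ) < 2)]
          nlinarith [mul_nonneg hε.le hC0]
  refine ⟨v, ?_, hP⟩
  have hsub : (⇑f - ⇑v : ℝ → ℂ) = (⇑f - g) + (g - ⇑v) := by
    funext x
    simp only [Pi.sub_apply, Pi.add_apply]
    ring
  calc eLpNorm (⇑f - ⇑v) 2 volume
      = eLpNorm ((⇑f - g) + (g - ⇑v)) 2 volume := by rw [hsub]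
    _ ≤ eLpNorm (⇑f - g) 2 volume + eLpNorm (g - ⇑v) 2 volume :=
        eLpNorm_add_le ((Lp.aestronglyMeasurable f).sub gcont.aestronglyMeasurable)
          (gcont.aestronglyMeasurable.sub (Lp.aestronglyMeasurable v)) one_le_two
    _ ≤ ENNReal.ofReal (ε/2) + ENNReal.ofReal (ε/2) := add_le_add gerr herr2
    _ = ENNReal.ofReal ε := by
        rw [← ENNReal.ofReal_add (by linarith) (by linarith)]
        norm_num

include hE hcomm in
lemma key_identity (f : Lp ℂ 2 (volume : Measure ℝ)) :
    ∀ᵐ x : ℝ, (M f) x * g0 x = (M f0lp) x * f x := by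
  have happrox : ∀ k : ℕ, ∃ v : Lp ℂ 2 (volume : Measure ℝ),
      eLpNorm (⇑f - ⇑v) 2 volume ≤ ENNReal.ofReal (1/((k:ℝ)+1)) ∧
      (∀ᵐ x : ℝ, (M v) x * g0 x = (M f0lp) x * v x) :=
    fun k => approx M E hE hcomm f (by positivity)
  choose v hv hPv using happrox
  have hup : Tendsto (fun k : ℕ => ENNReal.ofReal (1/((k:ℝ)+1))) atTop (nhds 0) := by
    have h0 := ENNReal.tendsto_ofReal (tendsto_one_div_add_atTop_nhds_zero_nat)
    simpa using h0
  -- convergence of v to f in seminorm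
  have hconv : Tendsto (fun k => eLpNorm (⇑(v k) - ⇑f) 2 volume) atTop (nhds 0) := by
    refine tendsto_of_tendsto_of_tendsto_of_le_of_le tendsto_const_nhds hup
      (fun k => zero_le) (fun k => ?_)
    rw [eLpNorm_sub_comm]
    exact hv k
  have hmeas : TendstoInMeasure volume (fun k => ⇑(v k)) atTop ⇑f :=
    tendstoInMeasure_of_tendsto_eLpNorm (p := 2) (by norm_num)
      (fun k => Lp.aestronglyMeasurable (v k)) (Lp.aestronglyMeasurable f) hconv
  obtain ⟨ns, hns_mono, hns⟩ := hmeas.exists_seq_tendsto_ae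
  -- convergence of v to f in the Lp space
  have hb' : ∀ k : ℕ, dist (v k) f ≤ 1/((k:ℝ)+1) := by
    intro k
    rw [Lp.dist_def, eLpNorm_sub_comm]
    have h3 : (eLpNorm (⇑f - ⇑(v k)) 2 volume).toReal ≤ (ENNReal.ofReal (1/((k:ℝ)+1))).toReal :=
      ENNReal.toReal_mono ENNReal.ofReal_ne_top (hv k)
    rwa [ENNReal.toReal_ofReal (by positivity)] at h3
  have ht : Tendsto v atTop (nhds f) := by
    rw [tendsto_iff_dist_tendsto_zero]
    exact squeeze_zero (fun k => dist_nonneg) hb' tendsto_one_div_add_atTop_nhds_zero_nat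
  have hMt : Tendsto (fun i => M (v (ns i))) atTop (nhds (M f)) :=
    (M.continuous.tendsto f).comp (ht.comp hns_mono.tendsto_atTop)
  have hMconv : Tendsto (fun i => eLpNorm (⇑(M (v (ns i))) - ⇑(M f)) 2 volume) atTop (nhds 0) := by
    have h1 : ∀ i : ℕ, eLpNorm (⇑(M (v (ns i))) - ⇑(M f)) 2 volume
        = ENNReal.ofReal (dist (M (v (ns i))) (M f)) := by
      intro i
      rw [Lp.dist_def, ENNReal.ofReal_toReal
        ((Lp.memLp (M (v (ns i)))).sub (Lp.memLp (M f))).eLpNorm_ne_top]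
    simp only [h1]
    have h2 : Tendsto (fun i => dist (M (v (ns i))) (M f)) atTop (nhds 0) :=
      tendsto_iff_dist_tendsto_zero.mp hMt
    have h3 := ENNReal.tendsto_ofReal h2
    simpa using h3
  have hMmeas : TendstoInMeasure volume (fun i => ⇑(M (v (ns i)))) atTop ⇑(M f) :=
    tendstoInMeasure_of_tendsto_eLpNorm (p := 2) (by norm_num)
      (fun i => Lp.aestronglyMeasurable _) (Lp.aestronglyMeasurable (M f)) hMconv
  obtain ⟨ms, hms_mono, hms⟩ := hMmeas.exists_seq_tendsto_ae
  have hPall : ∀ᵐ x : ℝ ∂(volume : Measure ℝ), ∀ k : ℕ,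
      (M (v k)) x * g0 x = (M f0lp) x * (v k) x := ae_all_iff.mpr hPv
  filter_upwards [hns, hms, hPall] with x hx1 hx2 hx3
  have hA : Tendsto (fun i => (M (v (ns (ms i)))) x * g0 x) atTop
      (nhds ((M f) x * g0 x)) := hx2.mul tendsto_const_nhds
  have hB : Tendsto (fun i => (M f0lp) x * (v (ns (ms i))) x) atTop
      (nhds ((M f0lp) x * f x)) :=
    tendsto_const_nhds.mul (hx1.comp hms_mono.tendsto_atTop)
  have heq : (fun i => (M (v (ns (ms i)))) x * g0 x)
      = fun i => (M f0lp) x * (v (ns (ms i))) x :=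
    funext fun i => hx3 (ns (ms i))
  rw [heq] at hA
  exact tendsto_nhds_unique hA hB

end Main
end CEP
end

open CEP in
/-- A bounded operator M on L²(ℝ) which preserves the dense domain
E = {f : e^{nx} f ∈ L² for all n > 0} and commutes on it with multiplication by e^{nx}
for every positive integer n is multiplication by a fixed measurable function F. -/
theorem commutant_of_exponentials_is_multiplication
    (M : Lp ℂ 2 (volume : Measure ℝ) →L[ℂ] Lp ℂ 2 (volume : Measure ℝ))
    (E : Set (Lp ℂ 2 (volume : Measure ℝ)))
    (hE : E = {f | ∀ n : ℕ, 0 < n →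
      MemLp (fun x : ℝ => (Real.exp (n * x) : ℂ) * f x) 2 (volume : Measure ℝ)})
    (hME : ∀ f ∈ E, M f ∈ E)
    (hcomm : ∀ (n : ℕ), 0 < n → ∀ f g : Lp ℂ 2 (volume : Measure ℝ), f ∈ E →
      (∀ᵐ x : ℝ, g x = (Real.exp (n * x) : ℂ) * f x) →
      (∀ᵐ x : ℝ, (M g) x = (Real.exp (n * x) : ℂ) * (M f) x)) :
    ∃ F : ℝ → ℂ, Measurable F ∧ ∀ f ∈ E, ∀ᵐ x : ℝ, (M f) x = F x * f x := by
  classical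
  have hasm := Lp.aestronglyMeasurable (M f0lp)
  set h : ℝ → ℂ := hasm.mk _ with hh
  have hhmeas : Measurable h := hasm.stronglyMeasurable_mk.measurable
  have hhae : ⇑(M f0lp) =ᵐ[volume] h := hasm.ae_eq_mk
  set F : ℝ → ℂ := fun x => h x * ((Real.exp (x^2) : ℝ) : ℂ) with hF
  have hFmeas : Measurable F :=
    hhmeas.mul (Complex.continuous_ofReal.comp
      (Real.continuous_exp.comp (continuous_pow 2))).measurable
  refine ⟨F, hFmeas, ?_⟩
  intro f _
  filter_upwards [key_identity M E hE hcomm f, hhae] with x hx1 hx2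
  have hg0 : g0 x * ((Real.exp (x^2) : ℝ) : ℂ) = 1 := by
    rw [g0, ← Complex.ofReal_mul, ← Real.exp_add]
    norm_num
  calc (M f) x = (M f) x * (g0 x * ((Real.exp (x^2) : ℝ) : ℂ)) := by rw [hg0, mul_one]
    _ = ((M f) x * g0 x) * ((Real.exp (x^2) : ℝ) : ℂ) := by ring
    _ = ((M f0lp) x * f x) * ((Real.exp (x^2) : ℝ) : ℂ) := by rw [hx1]
    _ = F x * f x := by simp only [hF]; rw [← hx2]; ring
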